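/- Let U ⊆ ℝⁿ be a linear subspace with orthogonal projection Π, let g ∈ ℝⁿ with Πg ≠ 0, let μ ∈ ℝⁿ be a unit vector, and let r > 0. Then the minimum of the linear functional y ↦ ⟨g, y⟩ over the ball section {y ∈ U : ‖y − rμ‖ ≤ r} is attained at y* = rΠμ − r‖Πμ‖·Πg/‖Πg‖, and the improvement satisfies 0 − min{⟨g,y⟩ : y ∈ U, ‖y − rμ‖ ≤ r} = r·(‖Πg‖·‖Πμ‖ − ⟨Πg, Πμ⟩). -/

import Mathlib

/-- The orthogonal projection onto a subspace of Euclidean space, viewed as a map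
into the ambient space. -/
noncomputable def proj {n : ℕ} (U : Submodule ℝ (EuclideanSpace ℝ (Fin n)))
    (g : EuclideanSpace ℝ (Fin n)) : EuclideanSpace ℝ (Fin n) :=
  (U.orthogonalProjection g : EuclideanSpace ℝ (Fin n))

/-- Exact ball-section improvement (boundary base point).  With `Π` the orthogonal
projection onto the subspace `U`, `Πg ≠ 0`, `μ` a unit vector, and `r > 0`, the
linear functional `y ↦ ⟨g,y⟩` over the ball section `{y ∈ U : ‖y − rμ‖ ≤ r}`
is minimized at `y* = rΠμ − r‖Πμ‖ Πg/‖Πg‖`, and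
`0 − min = r (‖Πg‖ ‖Πμ‖ − ⟨Πg,Πμ⟩)`. -/
theorem ball_section_boundary {n : ℕ} (U : Submodule ℝ (EuclideanSpace ℝ (Fin n)))
    (g μ : EuclideanSpace ℝ (Fin n)) (hμ : ‖μ‖ = 1) (r : ℝ) (hr : 0 < r)
    (hg : proj U g ≠ 0) :
    (r • proj U μ - (r * ‖proj U μ‖ / ‖proj U g‖) • proj U g ∈ U ∧
      ‖(r • proj U μ - (r * ‖proj U μ‖ / ‖proj U g‖) • proj U g) - r • μ‖ ≤ r) ∧
    (∀ y ∈ U, ‖y - r • μ‖ ≤ r →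
      (inner ℝ g (r • proj U μ - (r * ‖proj U μ‖ / ‖proj U g‖) • proj U g) : ℝ) ≤ inner ℝ g y) ∧
    0 - (inner ℝ g (r • proj U μ - (r * ‖proj U μ‖ / ‖proj U g‖) • proj U g) : ℝ) =
      r * (‖proj U g‖ * ‖proj U μ‖ - inner ℝ (proj U g) (proj U μ)) := by
  set p := proj U μ with hp
  set q := proj U g with hq
  have hpU : p ∈ U := (U.orthogonalProjection μ).2
  have hqU : q ∈ U := (U.orthogonalProjection g).2
  have hμp : μ - p ∈ Uᗮ := Submodule.sub_starProjection_mem_orthogonal (K := U) μ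
  have hq0 : (0:ℝ) < ‖q‖ := norm_pos_iff.mpr hg
  set c := r * ‖p‖ / ‖q‖ with hc
  have hc0 : 0 ≤ c := by positivity
  set y0 := r • p - c • q with hy0
  have hy0U : y0 ∈ U := U.sub_mem (U.smul_mem _ hpU) (U.smul_mem _ hqU)
  have hinner : ∀ y ∈ U, (inner ℝ g y : ℝ) = inner ℝ q y := by
    intro y hy
    have h2 : (inner ℝ (g - q) y : ℝ) = 0 := Submodule.starProjection_inner_eq_zero (K := U) g y hy
    rw [inner_sub_left] at h2
    linarith
  have hpperp : (inner ℝ p (μ - p) : ℝ) = 0 :=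
    Submodule.inner_right_of_mem_orthogonal hpU hμp
  have hnormμp : ‖μ - p‖^2 = 1 - ‖p‖^2 := by
    have h : μ = p + (μ - p) := by abel
    have h2 : ‖p + (μ - p)‖^2 = ‖p‖^2 + ‖μ - p‖^2 := by
      rw [norm_add_sq_real, hpperp]; ring
    rw [← h, hμ] at h2
    nlinarith
  have key : ∀ z ∈ U, ‖z - r • μ‖^2 = ‖z - r • p‖^2 + r^2 * (1 - ‖p‖^2) := by
    intro z hz
    have hdecomp : z - r • μ = (z - r • p) - r • (μ - p) := by
      rw [smul_sub]; abel
    have hperp : (inner ℝ (z - r • p) (r • (μ - p)) : ℝ) = 0 :=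
      Submodule.inner_right_of_mem_orthogonal (U.sub_mem hz (U.smul_mem _ hpU))
        (Uᗮ.smul_mem _ hμp)
    rw [hdecomp, norm_sub_sq_real, hperp, norm_smul, mul_pow]
    have : ‖r‖^2 = r^2 := by rw [Real.norm_eq_abs, sq_abs]
    rw [this, hnormμp]; ring
  -- value of inner g y0
  have hval : (inner ℝ g y0 : ℝ) = r * inner ℝ q p - r * ‖p‖ * ‖q‖ := by
    rw [hinner y0 hy0U, hy0, inner_sub_right, inner_smul_right, inner_smul_right,
      real_inner_self_eq_norm_sq]
    have h3 : r * ‖p‖ / ‖q‖ * ‖q‖ ^ 2 = r * ‖p‖ * ‖q‖ := by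
      field_simp
    linarith
  refine ⟨⟨hy0U, ?_⟩, ?_, ?_⟩
  · -- feasibility
    have h1 : y0 - r • p = -(c • q) := by rw [hy0]; abel
    have h2 : ‖y0 - r • μ‖^2 = r^2 := by
      rw [key y0 hy0U, h1, norm_neg, norm_smul, Real.norm_eq_abs, abs_of_nonneg hc0]
      have : c * ‖q‖ = r * ‖p‖ := by rw [hc]; field_simp
      rw [this]; ring
    nlinarith [norm_nonneg (y0 - r • μ)]
  · -- minimality
    intro y hy hle
    have hle2 : ‖y - r • p‖^2 ≤ r^2 * ‖p‖^2 := by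
      have h := key y hy
      nlinarith [norm_nonneg (y - r • μ)]
    have hle3 : ‖y - r • p‖ ≤ r * ‖p‖ := by
      have h := Real.sqrt_le_sqrt hle2
      rw [Real.sqrt_sq (norm_nonneg _)] at h
      calc ‖y - r • p‖ ≤ Real.sqrt (r ^ 2 * ‖p‖ ^ 2) := h
        _ = r * ‖p‖ := by
          rw [show r ^ 2 * ‖p‖ ^ 2 = (r * ‖p‖) ^ 2 by ring, Real.sqrt_sq (by positivity)]
    have hcs : |(inner ℝ q (y - r • p) : ℝ)| ≤ ‖q‖ * ‖y - r • p‖ := abs_real_inner_le_norm q _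
    have hlow : -(‖q‖ * (r * ‖p‖)) ≤ (inner ℝ q (y - r • p) : ℝ) := by
      have := neg_abs_le (inner ℝ q (y - r • p) : ℝ)
      have hm : ‖q‖ * ‖y - r • p‖ ≤ ‖q‖ * (r * ‖p‖) :=
        mul_le_mul_of_nonneg_left hle3 (norm_nonneg q)
      linarith
    have hsplit : (inner ℝ q y : ℝ) = r * inner ℝ q p + inner ℝ q (y - r • p) := by
      rw [← inner_smul_right q p r]
      rw [← inner_add_right]
      congr 1
      abel
    rw [hinner y hy, hval, hsplit]
    linarith
  · rw [hval]; ring
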